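/- (Hata's lemma on irrationality measure from linear forms.) Let α be an irrational real number, let σ, τ > 0, and let (p_n) and (q_n) be sequences of integers with l_n = q_n·α + p_n. If lim_{n→∞} (1/n)·ln|q_n| = σ and limsup_{n→∞} (1/n)·ln|l_n| ≤ −τ, then the irrationality measure of α satisfies μ(α) ≤ 1 + σ/τ; that is, for every real κ > 1 + σ/τ, the inequality |α − p/q| < q^(−κ) has only finitely many solutions in integers p and positive integers q. -/

import Mathlib

set_option maxHeartbeats 1000000 in
theorem hata_irrationality_measure (α : ℝ) (hα : Irrational α)
    (σ τ : ℝ) (hσ : 0 < σ) (hτ : 0 < τ)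
    (p q : ℕ → ℤ) (l : ℕ → ℝ) (hl : ∀ n, l n = (q n : ℝ) * α + (p n : ℝ))
    (hq : Filter.Tendsto (fun n : ℕ => (1 / (n : ℝ)) * Real.log |(q n : ℝ)|)
      Filter.atTop (nhds σ))
    (hlsup : Filter.limsup (fun n : ℕ => (1 / (n : ℝ)) * Real.log |l n|) Filter.atTop ≤ -τ) :
    ∀ κ : ℝ, κ > 1 + σ / τ →
      {pq : ℤ × ℕ+ | |α - (pq.1 : ℝ) / ((pq.2 : ℕ) : ℝ)| < ((pq.2 : ℕ) : ℝ) ^ (-κ)}.Finite := by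
  intro κ hκ
  have hστ : 0 < σ / τ := div_pos hσ hτ
  have hκ1 : 1 < κ := by linarith
  have h1 : σ < (κ - 1) * τ := by
    have hκ' : σ / τ < κ - 1 := by linarith
    calc σ = σ / τ * τ := by field_simp
      _ < (κ - 1) * τ := mul_lt_mul_of_pos_right hκ' hτ
  have h2 : σ + τ < κ * τ := by nlinarith
  -- choose ε
  set ε : ℝ := min (σ / 2) (min (τ / 6)
      (min (((κ - 1) * τ - σ) / (2 * κ)) ((κ * τ - σ - τ) / (2 * (3 * κ - 2))))) with hεdef
  have hε0 : 0 < ε := by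
    refine lt_min (by positivity) (lt_min (by positivity) (lt_min ?_ ?_))
    · apply div_pos (by linarith) (by linarith)
    · apply div_pos (by linarith) (by linarith)
  have hεσ : ε ≤ σ / 2 := min_le_left _ _
  have hετ : ε ≤ τ / 6 := le_trans (min_le_right _ _) (min_le_left _ _)
  have hεa : ε ≤ ((κ - 1) * τ - σ) / (2 * κ) :=
    le_trans (min_le_right _ _) (le_trans (min_le_right _ _) (min_le_left _ _))
  have hεb : ε ≤ (κ * τ - σ - τ) / (2 * (3 * κ - 2)) :=
    le_trans (min_le_right _ _) (le_trans (min_le_right _ _) (min_le_right _ _))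
  have hs : 0 < σ + ε := by linarith
  have hσε : 0 < σ - ε := by linarith
  have ht : 0 < τ - ε := by linarith
  have hr : 0 < τ - 3 * ε := by linarith
  have hw : 0 < σ + τ - 2 * ε := by linarith
  have hc1 : σ + ε < (κ - 1) * (τ - ε) := by
    have h3 := (le_div_iff₀ (by linarith : (0:ℝ) < 2 * κ)).mp hεa
    nlinarith
  have hc2 : σ + τ - 2 * ε < κ * (τ - 3 * ε) := by
    have h3 := (le_div_iff₀ (by linarith : (0:ℝ) < 2 * (3 * κ - 2))).mp hεb
    nlinarith
  -- eventual bounds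
  obtain ⟨N₁, hN₁⟩ := Metric.tendsto_atTop.mp hq ε hε0
  have hbdd : Filter.IsBoundedUnder (· ≤ ·) Filter.atTop
      (fun n : ℕ => (1 / (n : ℝ)) * Real.log |l n|) := by
    by_contra hb
    have hempty : {a : ℝ | ∀ᶠ (n : ℕ) in Filter.atTop, (1 / (n : ℝ)) * Real.log |l n| ≤ a} = ∅ := by
      ext a
      simp only [Set.mem_setOf_eq, Set.mem_empty_iff_false, iff_false]
      intro ha
      exact hb ⟨a, by rwa [Filter.eventually_map]⟩
    rw [Filter.limsup_eq, hempty, Real.sInf_empty] at hlsup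
    linarith
  have hev : ∀ᶠ (n : ℕ) in Filter.atTop, (1 / (n : ℝ)) * Real.log |l n| < -τ + ε :=
    Filter.eventually_lt_of_limsup_lt (lt_of_le_of_lt hlsup (by linarith)) hbdd
  obtain ⟨N₂, hN₂⟩ := Filter.eventually_atTop.mp hev
  set N : ℕ := max (max N₁ N₂) 1 with hNdef
  have hqb : ∀ n, N ≤ n →
      Real.exp ((σ - ε) * n) ≤ |(q n : ℝ)| ∧ |(q n : ℝ)| ≤ Real.exp ((σ + ε) * n) := by
    intro n hn
    have hn1 : (1 : ℝ) ≤ (n : ℝ) := by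
      exact_mod_cast le_trans (le_max_right _ _) hn
    have hn0 : (0 : ℝ) < n := by linarith
    have hd := hN₁ n (le_trans (le_trans (le_max_left _ _) (le_max_left _ _)) hn)
    rw [Real.dist_eq] at hd
    have habs := abs_lt.mp hd
    have hlow : (σ - ε) * n < Real.log |(q n : ℝ)| := by
      have h' : σ - ε < 1 / (n : ℝ) * Real.log |(q n : ℝ)| := by linarith [habs.1]
      calc (σ - ε) * n < 1 / (n : ℝ) * Real.log |(q n : ℝ)| * n :=
            mul_lt_mul_of_pos_right h' hn0
        _ = Real.log |(q n : ℝ)| := by field_simp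
    have hhigh : Real.log |(q n : ℝ)| < (σ + ε) * n := by
      have h' : 1 / (n : ℝ) * Real.log |(q n : ℝ)| < σ + ε := by linarith [habs.2]
      calc Real.log |(q n : ℝ)| = 1 / (n : ℝ) * Real.log |(q n : ℝ)| * n := by field_simp
        _ < (σ + ε) * n := mul_lt_mul_of_pos_right h' hn0
    have hqpos : 0 < |(q n : ℝ)| := by
      rcases eq_or_lt_of_le (abs_nonneg ((q n : ℝ))) with h0 | h0
      · exfalso
        rw [← h0, Real.log_zero] at hlow
        nlinarith
      · exact h0
    constructor
    · calc Real.exp ((σ - ε) * n) ≤ Real.exp (Real.log |(q n : ℝ)|) :=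
            Real.exp_le_exp.mpr hlow.le
        _ = |(q n : ℝ)| := Real.exp_log hqpos
    · calc |(q n : ℝ)| = Real.exp (Real.log |(q n : ℝ)|) := (Real.exp_log hqpos).symm
        _ ≤ Real.exp ((σ + ε) * n) := Real.exp_le_exp.mpr hhigh.le
  have hlb : ∀ n, N ≤ n → |l n| ≤ Real.exp ((-τ + ε) * n) := by
    intro n hn
    have hn1 : (1 : ℝ) ≤ (n : ℝ) := by
      exact_mod_cast le_trans (le_max_right _ _) hn
    have hn0 : (0 : ℝ) < n := by linarith
    have hd := hN₂ n (le_trans (le_trans (le_max_right _ _) (le_max_left _ _)) hn)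
    have hhigh : Real.log |l n| < (-τ + ε) * n := by
      calc Real.log |l n| = 1 / (n : ℝ) * Real.log |l n| * n := by field_simp
        _ < (-τ + ε) * n := mul_lt_mul_of_pos_right hd hn0
    rcases eq_or_lt_of_le (abs_nonneg (l n)) with h0 | h0
    · rw [← h0]
      positivity
    · calc |l n| = Real.exp (Real.log |l n|) := (Real.exp_log h0).symm
        _ ≤ Real.exp ((-τ + ε) * n) := Real.exp_le_exp.mpr hhigh.le
  -- main bound
  set K : ℝ := (N : ℝ) + 3 with hKdef
  set X₁ : ℝ := ((σ + ε) * (τ - ε) * K + (σ + ε) * Real.log 2 + (τ - ε) * Real.log 2) /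
      ((κ - 1) * (τ - ε) - (σ + ε)) with hX₁def
  set X₂ : ℝ := ((σ + ε) * (σ + τ - 2 * ε) * K + (σ + τ - 2 * ε) * Real.log 2) /
      (κ * (τ - 3 * ε) - (σ + τ - 2 * ε)) with hX₂def
  have hD1 : 0 < (κ - 1) * (τ - ε) - (σ + ε) := by linarith
  have hD2 : 0 < κ * (τ - 3 * ε) - (σ + τ - 2 * ε) := by linarith
  have hL2 : 0 < Real.log 2 := Real.log_pos (by norm_num)
  have key : ∀ (a : ℤ) (b : ℕ+), |α - (a : ℝ) / ((b : ℕ) : ℝ)| < ((b : ℕ) : ℝ) ^ (-κ) →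
      Real.log ((b : ℕ) : ℝ) ≤ max X₁ X₂ := by
    intro a b hbad
    set qr : ℝ := ((b : ℕ) : ℝ) with hqrdef
    have hqr1 : (1 : ℝ) ≤ qr := by
      rw [hqrdef]
      have : (1 : ℕ) ≤ (b : ℕ) := b.2
      exact_mod_cast this
    have hqr0 : 0 < qr := by linarith
    set δ : ℝ := |α - (a : ℝ) / qr| with hδdef
    have hane : α ≠ (a : ℝ) / qr := by
      intro h
      exact hα ⟨(a : ℚ) / ((b : ℕ) : ℚ), by rw [h]; push_cast; ring⟩
    have hδ0 : 0 < δ := abs_pos.mpr (sub_ne_zero.mpr hane)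
    have hδ1 : δ < 1 := by
      refine lt_of_lt_of_le hbad (Real.rpow_le_one_of_one_le_of_nonpos hqr1 (by linarith))
    have hd : Real.log δ < -κ * Real.log qr := by
      have := Real.log_lt_log hδ0 hbad
      rwa [Real.log_rpow hqr0] at this
    have hx0 : 0 ≤ Real.log qr := Real.log_nonneg hqr1
    have hd0 : Real.log δ < 0 := Real.log_neg hδ0 hδ1
    set A : ℝ := (Real.log 2 + Real.log qr) / (τ - ε) with hAdef
    set B : ℝ := (-Real.log δ) / (σ + τ - 2 * ε) with hBdef
    have hA0 : 0 ≤ A := by positivity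
    have hB0 : 0 ≤ B := by
      apply div_nonneg (by linarith) (by linarith)
    have hAB0 : 0 ≤ max A B := le_trans hA0 (le_max_left _ _)
    set n : ℕ := N + 2 + Nat.ceil (max A B) with hndef
    have hnN : N ≤ n := by omega
    have hnr : (n : ℝ) = (N : ℝ) + 2 + (Nat.ceil (max A B) : ℝ) := by
      rw [hndef]; push_cast; ring
    have hceil1 : max A B ≤ (Nat.ceil (max A B) : ℝ) := Nat.le_ceil _
    have hceil2 : (Nat.ceil (max A B) : ℝ) < max A B + 1 := Nat.ceil_lt_add_one hAB0
    have hnub : (n : ℝ) ≤ K + max A B := by rw [hnr, hKdef]; linarith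
    have hnA : A < (n : ℝ) := by
      rw [hnr]; have := le_max_left A B; linarith
    have hnB : B < (n : ℝ) := by
      rw [hnr]; have := le_max_right A B; linarith
    have htn : Real.log 2 + Real.log qr < (τ - ε) * n := by
      have := (div_lt_iff₀ ht).mp hnA
      linarith [this]
    have hwn : -Real.log δ < (σ + τ - 2 * ε) * n := by
      have := (div_lt_iff₀ hw).mp hnB
      linarith [this]
    obtain ⟨hqlow, hqhigh⟩ := hqb n hnN
    have hlub := hlb n hnN
    have habs1 : |qr * α - (a : ℝ)| = qr * δ := by
      rw [hδdef, show qr * α - (a : ℝ) = qr * (α - (a : ℝ) / qr) by field_simp, abs_mul,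
        abs_of_pos hqr0]
    have hδexp : Real.exp (Real.log δ) = δ := Real.exp_log hδ0
    -- the integer is nonzero
    have hM : ((b : ℕ) : ℤ) * p n + a * q n ≠ 0 := by
      intro h0
      have h0r : qr * (p n : ℝ) + (a : ℝ) * (q n : ℝ) = 0 := by
        have := congrArg (fun z : ℤ => (z : ℝ)) h0
        push_cast at this
        rw [hqrdef]
        push_cast
        linarith [this]
      have hid : qr * l n = (q n : ℝ) * (qr * α - (a : ℝ)) := by
        rw [hl n]; linear_combination h0r
      have habs2 : qr * |l n| = |(q n : ℝ)| * (qr * δ) := by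
        have := congrArg abs hid
        rwa [abs_mul, abs_mul, abs_of_pos hqr0, habs1] at this
      have h3 : |l n| = |(q n : ℝ)| * δ := by
        apply mul_left_cancel₀ hqr0.ne'
        rw [habs2]; ring
      have h4 : Real.exp ((σ - ε) * n) * δ ≤ Real.exp ((-τ + ε) * n) := by
        calc Real.exp ((σ - ε) * n) * δ ≤ |(q n : ℝ)| * δ :=
              mul_le_mul_of_nonneg_right hqlow hδ0.le
          _ = |l n| := h3.symm
          _ ≤ Real.exp ((-τ + ε) * n) := hlub
      have h5 : Real.exp (-((σ + τ - 2 * ε) * n)) < δ := by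
        rw [← hδexp]
        exact Real.exp_lt_exp.mpr (by linarith)
      have h6 : Real.exp ((σ - ε) * n) * Real.exp (-((σ + τ - 2 * ε) * n)) =
          Real.exp ((-τ + ε) * n) := by
        rw [← Real.exp_add]; congr 1; ring
      have h7 := mul_lt_mul_of_pos_left h5 (Real.exp_pos ((σ - ε) * n))
      rw [h6] at h7
      linarith
    have hone : (1 : ℝ) ≤ qr * |l n| + |(q n : ℝ)| * (qr * δ) := by
      have h1' : (1 : ℤ) ≤ |((b : ℕ) : ℤ) * p n + a * q n| := Int.one_le_abs hM
      have h2' : (1 : ℝ) ≤ |((((b : ℕ) : ℤ) * p n + a * q n : ℤ) : ℝ)| := by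
        rw [← Int.cast_abs]; exact_mod_cast h1'
      have hid : ((((b : ℕ) : ℤ) * p n + a * q n : ℤ) : ℝ) =
          qr * l n - (q n : ℝ) * (qr * α - (a : ℝ)) := by
        push_cast
        rw [hl n, hqrdef]
        push_cast
        ring
      calc (1 : ℝ) ≤ |qr * l n - (q n : ℝ) * (qr * α - (a : ℝ))| := by rwa [hid] at h2'
        _ ≤ |qr * l n| + |(q n : ℝ) * (qr * α - (a : ℝ))| := abs_sub _ _
        _ = qr * |l n| + |(q n : ℝ)| * (qr * δ) := by
            rw [abs_mul, abs_mul, abs_of_pos hqr0, habs1]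
    have hfirst : qr * |l n| < 1 / 2 := by
      have hexplt : Real.exp ((-τ + ε) * n) < Real.exp (-(Real.log 2 + Real.log qr)) :=
        Real.exp_lt_exp.mpr (by linarith)
      have hexpeq : Real.exp (-(Real.log 2 + Real.log qr)) = (2 * qr)⁻¹ := by
        rw [Real.exp_neg, Real.exp_add, Real.exp_log (by norm_num : (0:ℝ) < 2),
          Real.exp_log hqr0]
      have : |l n| < (2 * qr)⁻¹ := by
        rw [← hexpeq]; exact lt_of_le_of_lt hlub hexplt
      calc qr * |l n| < qr * (2 * qr)⁻¹ := mul_lt_mul_of_pos_left this hqr0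
        _ = 1 / 2 := by field_simp
    have hsecond : |(q n : ℝ)| * (qr * δ) ≤ Real.exp ((σ + ε) * n) * (qr * δ) :=
      mul_le_mul_of_nonneg_right hqhigh (by positivity)
    have hhalf : 1 / 2 < Real.exp ((σ + ε) * n) * (qr * δ) := by linarith
    have hlog : -Real.log 2 < (σ + ε) * n + Real.log qr + Real.log δ := by
      have h7 := Real.log_lt_log (by norm_num : (0:ℝ) < 1 / 2) hhalf
      rw [Real.log_mul (Real.exp_pos _).ne' (by positivity),
        Real.log_mul hqr0.ne' hδ0.ne', Real.log_exp, one_div, Real.log_inv] at h7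
      linarith
    -- case split on which term dominates
    rcases le_total B A with hBA | hAB
    · -- A dominates
      have hmax : max A B = A := max_eq_left hBA
      have hub : (τ - ε) * (n : ℝ) ≤ (τ - ε) * K + Real.log 2 + Real.log qr := by
        have h8 : (n : ℝ) ≤ K + A := by rw [← hmax]; exact hnub
        have h9 := mul_le_mul_of_nonneg_left h8 ht.le
        have h10 : (τ - ε) * A = Real.log 2 + Real.log qr := by
          rw [hAdef]; field_simp
        rw [mul_add, h10] at h9
        linarith
      refine le_trans ?_ (le_max_left X₁ X₂)
      rw [hX₁def, le_div_iff₀ hD1]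
      have e1 : (κ - 1) * Real.log qr - Real.log 2 < (σ + ε) * n := by
        linarith only [hlog, hd]
      have e2 := mul_lt_mul_of_pos_left e1 ht
      have e3 := mul_le_mul_of_nonneg_left hub hs.le
      linarith only [e2, e3]
    · -- B dominates
      have hmax : max A B = B := max_eq_right hAB
      have hub : (σ + τ - 2 * ε) * (n : ℝ) ≤ (σ + τ - 2 * ε) * K - Real.log δ := by
        have h8 : (n : ℝ) ≤ K + B := by rw [← hmax]; exact hnub
        have h9 := mul_le_mul_of_nonneg_left h8 hw.le
        have h10 : (σ + τ - 2 * ε) * B = -Real.log δ := by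
          rw [hBdef]; field_simp
        rw [mul_add, h10] at h9
        linarith
      refine le_trans ?_ (le_max_right X₁ X₂)
      rw [hX₂def, le_div_iff₀ hD2]
      have e1 : -Real.log 2 - Real.log qr - Real.log δ < (σ + ε) * n := by
        linarith only [hlog]
      have e2 := mul_lt_mul_of_pos_left e1 hw
      have e3 := mul_le_mul_of_nonneg_left hub hs.le
      have e4 := mul_lt_mul_of_pos_left hd hr
      linarith only [e2, e3, e4]
  -- wrap up: bound the set
  set Qb : ℝ := Real.exp (max X₁ X₂) with hQdef
  have hQ0 : 0 < Qb := Real.exp_pos _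
  set Mb : ℕ := Nat.floor Qb with hMdef
  set bM : ℕ+ := ⟨Mb + 1, Nat.succ_pos Mb⟩ with hbMdef
  set R : ℝ := Qb * (|α| + 1) + 1 with hRdef
  set P : ℤ := ⌈R⌉ with hPdef
  apply Set.Finite.subset (Set.Finite.prod (Set.finite_Icc (-P) P) (Set.finite_Icc 1 bM))
  rintro ⟨a, b⟩ hab
  simp only [Set.mem_setOf_eq] at hab
  have hxb := key a b hab
  have hqr1 : (1 : ℝ) ≤ ((b : ℕ) : ℝ) := by
    have : (1 : ℕ) ≤ (b : ℕ) := b.2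
    exact_mod_cast this
  have hqr0 : (0 : ℝ) < ((b : ℕ) : ℝ) := by linarith
  have hqQ : ((b : ℕ) : ℝ) ≤ Qb := by
    calc ((b : ℕ) : ℝ) = Real.exp (Real.log ((b : ℕ) : ℝ)) := (Real.exp_log hqr0).symm
      _ ≤ Qb := Real.exp_le_exp.mpr hxb
  constructor
  · -- first coordinate
    simp only [Set.mem_Icc]
    have h1 : |α - (a : ℝ) / ((b : ℕ) : ℝ)| < 1 :=
      lt_of_lt_of_le hab (Real.rpow_le_one_of_one_le_of_nonpos hqr1 (by linarith))
    have h2 : |(a : ℝ) / ((b : ℕ) : ℝ)| ≤ |α| + 1 := by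
      calc |(a : ℝ) / ((b : ℕ) : ℝ)| = |α - (α - (a : ℝ) / ((b : ℕ) : ℝ))| := by ring_nf
        _ ≤ |α| + |α - (a : ℝ) / ((b : ℕ) : ℝ)| := abs_sub _ _
        _ ≤ |α| + 1 := by linarith
    have h3 : |(a : ℝ)| ≤ R := by
      have heq : |(a : ℝ)| = |(a : ℝ) / ((b : ℕ) : ℝ)| * ((b : ℕ) : ℝ) := by
        rw [abs_div, abs_of_pos hqr0]
        field_simp
      rw [heq]
      calc |(a : ℝ) / ((b : ℕ) : ℝ)| * ((b : ℕ) : ℝ) ≤ (|α| + 1) * Qb := by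
            apply mul_le_mul h2 hqQ hqr0.le (by positivity)
        _ ≤ R := by rw [hRdef]; nlinarith
    have hRP : R ≤ (P : ℝ) := by rw [hPdef]; exact Int.le_ceil R
    have habs := abs_le.mp h3
    constructor
    · have : ((-P : ℤ) : ℝ) ≤ (a : ℝ) := by push_cast; linarith
      exact_mod_cast this
    · have : ((a : ℤ) : ℝ) ≤ ((P : ℤ) : ℝ) := by push_cast; linarith
      exact_mod_cast this
  · -- second coordinate
    simp only [Set.mem_Icc]
    refine ⟨b.one_le, ?_⟩
    have h4 : (b : ℕ) ≤ Mb := Nat.le_floor hqQ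
    have h5 : (b : ℕ) ≤ (bM : ℕ) := by
      rw [hbMdef]
      exact le_trans h4 (Nat.le_succ Mb)
    exact_mod_cast h5
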